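/- arXiv:2407.06661 — 4 statements merged into one kernel-verified Lean document; each statement's English description precedes it below -/
import Mathlib

section
/- Let $L_1, L_2, L_3 > 0$ and let $k_1, k_2, k_3$ be nonzero real numbers with $-k_1/k_2 \ne L_1/L_2$ (equivalently $k_1 L_2 + k_2 L_1 \ne 0$). Then for every tuple of continuous functions $f_j : [0,L_j] \to \mathbb{R}$ ($j = 1,2,3$) there exists a unique tuple of twice continuously differentiable functions $\psi_j : [0,L_j] \to \mathbb{R}$ satisfying: $-k_j \psi_j'' = f_j$ on $[0,L_j]$ for $j=1,2,3$; $\psi_3(0) = 0$; $\psi_1(0) = \psi_2(0)$; $k_1 \psi_1'(0) + k_2 \psi_2'(0) = 0$; $\psi_1(L_1) = \psi_2(L_2) = \psi_3(L_3)$; and $k_1 \psi_1'(L_1) + k_2 \psi_2'(L_2) + k_3 \psi_3'(L_3) = 0$. -/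
open Set MeasureTheory intervalIntegral

noncomputable def PI (g : ℝ → ℝ) (x : ℝ) : ℝ := ∫ t in (0:ℝ)..x, g t

lemma PI_zero (g : ℝ → ℝ) : PI g 0 = 0 := intervalIntegral.integral_same

lemma PI_hasDerivAt {g : ℝ → ℝ} (hg : Continuous g) (x : ℝ) :
    HasDerivAt (PI g) (g x) x :=
  intervalIntegral.integral_hasDerivAt_right (hg.intervalIntegrable 0 x)
    (hg.stronglyMeasurableAtFilter _ _) hg.continuousAt

lemma PI_continuous {g : ℝ → ℝ} (hg : Continuous g) : Continuous (PI g) :=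
  Differentiable.continuous (fun x => (PI_hasDerivAt hg x).differentiableAt)

noncomputable def sol (g : ℝ → ℝ) (k a b : ℝ) : ℝ → ℝ :=
  fun x => a + b * x - PI (PI g) x / k

lemma sol_hasDerivAt {g : ℝ → ℝ} (hg : Continuous g) (k a b x : ℝ) :
    HasDerivAt (sol g k a b) (b - PI g x / k) x := by
  have h1 : HasDerivAt (fun x : ℝ => a + b * x) b x := by
    simpa using ((hasDerivAt_id x).const_mul b).const_add a
  exact h1.sub ((PI_hasDerivAt (PI_continuous hg) x).div_const k)

lemma sol_deriv {g : ℝ → ℝ} (hg : Continuous g) (k a b : ℝ) :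
    deriv (sol g k a b) = fun x => b - PI g x / k :=
  funext fun x => (sol_hasDerivAt hg k a b x).deriv

lemma sol_contDiff {g : ℝ → ℝ} (hg : Continuous g) (k a b : ℝ) :
    ContDiff ℝ 2 (sol g k a b) := by
  have h2 : ContDiff ℝ 1 (deriv (sol g k a b)) := by
    rw [sol_deriv hg]
    refine contDiff_one_iff_deriv.2 ⟨fun x => ?_, ?_⟩
    · exact ((PI_hasDerivAt hg x).div_const k).const_sub b |>.differentiableAt
    · have : deriv (fun x => b - PI g x / k) = fun x => -(g x / k) := funext fun x =>
        (((PI_hasDerivAt hg x).div_const k).const_sub b).deriv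
      rw [this]; exact (hg.div_const k).neg
  have : ContDiff ℝ (1 + 1) (sol g k a b) := by
    rw [contDiff_succ_iff_deriv]
    exact ⟨fun x => (sol_hasDerivAt hg k a b x).differentiableAt, by simp, h2⟩
  exact by norm_num at this ⊢; exact this

lemma iter2_eq {L : ℝ} (hL : 0 < L) (φ : ℝ → ℝ) {x : ℝ} (hx : x ∈ Icc 0 L) :
    iteratedDerivWithin 2 φ (Icc 0 L) x
      = derivWithin (derivWithin φ (Icc 0 L)) (Icc 0 L) x := by
  have hu : UniqueDiffOn ℝ (Icc (0:ℝ) L) := uniqueDiffOn_Icc hL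
  have h1 : iteratedDerivWithin (1 + 1) φ (Icc 0 L) x
      = iteratedDerivWithin 1 (derivWithin φ (Icc 0 L)) (Icc 0 L) x :=
    congrFun iteratedDerivWithin_succ' x
  rw [show (2 : ℕ) = 1 + 1 from rfl, h1, iteratedDerivWithin_one]

lemma sol_derivWithin {L : ℝ} (hL : 0 < L) {g : ℝ → ℝ} (hg : Continuous g) (k a b : ℝ)
    {x : ℝ} (hx : x ∈ Icc 0 L) :
    derivWithin (sol g k a b) (Icc 0 L) x = b - PI g x / k := by
  rw [DifferentiableAt.derivWithin (sol_hasDerivAt hg k a b x).differentiableAt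
    ((uniqueDiffOn_Icc hL) x hx)]
  exact (sol_hasDerivAt hg k a b x).deriv

lemma sol_iter2 {L : ℝ} (hL : 0 < L) {g : ℝ → ℝ} (hg : Continuous g) (k a b : ℝ)
    {x : ℝ} (hx : x ∈ Icc 0 L) :
    iteratedDerivWithin 2 (sol g k a b) (Icc 0 L) x = -(g x / k) := by
  rw [iter2_eq hL _ hx]
  have h1 : Set.EqOn (derivWithin (sol g k a b) (Icc 0 L)) (fun y => b - PI g y / k)
      (Icc 0 L) := fun y hy => sol_derivWithin hL hg k a b hy
  rw [derivWithin_congr h1 (h1 hx)]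
  have h2 : HasDerivAt (fun y => b - PI g y / k) (-(g x / k)) x :=
    ((PI_hasDerivAt hg x).div_const k).const_sub b
  rw [h2.differentiableAt.derivWithin ((uniqueDiffOn_Icc hL) x hx), h2.deriv]

lemma core {L k : ℝ} (hL : 0 < L) {g φ : ℝ → ℝ} (hg : Continuous g)
    (hφ : ContDiffOn ℝ 2 φ (Icc 0 L))
    (hode : ∀ x ∈ Icc (0:ℝ) L, iteratedDerivWithin 2 φ (Icc 0 L) x = -(g x / k)) :
    (∀ x ∈ Icc (0:ℝ) L, derivWithin φ (Icc 0 L) x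
        = derivWithin φ (Icc 0 L) 0 - PI g x / k) ∧
    (∀ x ∈ Icc (0:ℝ) L, φ x
        = φ 0 + derivWithin φ (Icc 0 L) 0 * x - PI (PI g) x / k) := by
  have hu : UniqueDiffOn ℝ (Icc (0:ℝ) L) := uniqueDiffOn_Icc hL
  set b := derivWithin φ (Icc 0 L) 0 with hb
  have hφ'diff : DifferentiableOn ℝ (derivWithin φ (Icc 0 L)) (Icc 0 L) := by
    have := hφ.derivWithin hu (m := 1) (by norm_num)
    exact this.differentiableOn (by norm_num)
  have hhd : ∀ x ∈ Icc (0:ℝ) L,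
      derivWithin (fun y => b - PI g y / k) (Icc 0 L) x = -(g x / k) := by
    intro x hx
    have h2 : HasDerivAt (fun y => b - PI g y / k) (-(g x / k)) x :=
      ((PI_hasDerivAt hg x).div_const k).const_sub b
    rw [h2.differentiableAt.derivWithin (hu x hx), h2.deriv]
  have step1 : ∀ x ∈ Icc (0:ℝ) L, derivWithin φ (Icc 0 L) x = b - PI g x / k := by
    apply eq_of_derivWithin_eq hφ'diff
    · intro x _
      exact (((PI_hasDerivAt hg x).div_const k).const_sub b).differentiableAt.differentiableWithinAt
    · intro x hx
      have hx' : x ∈ Icc (0:ℝ) L := mem_Icc_of_Ico hx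
      rw [hhd x hx', ← hode x hx', iter2_eq hL φ hx']
    · simp [PI_zero, hb]
  refine ⟨step1, ?_⟩
  apply eq_of_derivWithin_eq (hφ.differentiableOn (by norm_num))
  · intro x _
    exact (sol_hasDerivAt hg k (φ 0) b x).differentiableAt.differentiableWithinAt
  · intro x hx
    have hx' : x ∈ Icc (0:ℝ) L := mem_Icc_of_Ico hx
    exact (step1 x hx').trans (sol_derivWithin hL hg k (φ 0) b hx').symm
  · simp [PI_zero]



/-- Classical solution of the general three-edge tadpole network problem: the loop
consists of edges `1` and `2` of lengths `L₁, L₂` joined at a vertex (coordinate `0` of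
both) and at the internal vertex (coordinate `L j`), the tail edge `3` of length `L₃`
joins the internal vertex (its coordinate `L₃`) to the external Dirichlet vertex
(coordinate `0`). -/
def IsThreeTadpoleSolutionVar (L₁ L₂ L₃ k₁ k₂ k₃ : ℝ) (f₁ f₂ f₃ : ℝ → ℝ)
    (ψ₁ ψ₂ ψ₃ : ℝ → ℝ) : Prop :=
  ContDiffOn ℝ 2 ψ₁ (Set.Icc 0 L₁) ∧ ContDiffOn ℝ 2 ψ₂ (Set.Icc 0 L₂) ∧
  ContDiffOn ℝ 2 ψ₃ (Set.Icc 0 L₃) ∧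
  (∀ x ∈ Set.Icc (0 : ℝ) L₁, -(k₁ * iteratedDerivWithin 2 ψ₁ (Set.Icc 0 L₁) x) = f₁ x) ∧
  (∀ x ∈ Set.Icc (0 : ℝ) L₂, -(k₂ * iteratedDerivWithin 2 ψ₂ (Set.Icc 0 L₂) x) = f₂ x) ∧
  (∀ x ∈ Set.Icc (0 : ℝ) L₃, -(k₃ * iteratedDerivWithin 2 ψ₃ (Set.Icc 0 L₃) x) = f₃ x) ∧
  ψ₃ 0 = 0 ∧
  ψ₁ 0 = ψ₂ 0 ∧
  k₁ * derivWithin ψ₁ (Set.Icc 0 L₁) 0 + k₂ * derivWithin ψ₂ (Set.Icc 0 L₂) 0 = 0 ∧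
  ψ₁ L₁ = ψ₂ L₂ ∧ ψ₂ L₂ = ψ₃ L₃ ∧
  k₁ * derivWithin ψ₁ (Set.Icc 0 L₁) L₁ + k₂ * derivWithin ψ₂ (Set.Icc 0 L₂) L₂
    + k₃ * derivWithin ψ₃ (Set.Icc 0 L₃) L₃ = 0

/-- Well-posedness for a general three-phase tadpole network (Corollary 4.3): the
problem is well-posed provided `-k₁/k₂ ≠ L₁/L₂`. -/
theorem stmt_11 (L₁ L₂ L₃ : ℝ) (hL₁ : 0 < L₁) (hL₂ : 0 < L₂) (hL₃ : 0 < L₃)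
    (k₁ k₂ k₃ : ℝ) (hk₁ : k₁ ≠ 0) (hk₂ : k₂ ≠ 0) (hk₃ : k₃ ≠ 0)
    (hres : -(k₁ / k₂) ≠ L₁ / L₂)
    (f₁ f₂ f₃ : ℝ → ℝ)
    (hf₁ : ContinuousOn f₁ (Set.Icc 0 L₁)) (hf₂ : ContinuousOn f₂ (Set.Icc 0 L₂))
    (hf₃ : ContinuousOn f₃ (Set.Icc 0 L₃)) :
    ∃ ψ₁ ψ₂ ψ₃ : ℝ → ℝ, IsThreeTadpoleSolutionVar L₁ L₂ L₃ k₁ k₂ k₃ f₁ f₂ f₃ ψ₁ ψ₂ ψ₃ ∧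
      ∀ φ₁ φ₂ φ₃ : ℝ → ℝ, IsThreeTadpoleSolutionVar L₁ L₂ L₃ k₁ k₂ k₃ f₁ f₂ f₃ φ₁ φ₂ φ₃ →
        (∀ x ∈ Set.Icc (0 : ℝ) L₁, φ₁ x = ψ₁ x) ∧
        (∀ x ∈ Set.Icc (0 : ℝ) L₂, φ₂ x = ψ₂ x) ∧
        (∀ x ∈ Set.Icc (0 : ℝ) L₃, φ₃ x = ψ₃ x) := by
  -- continuous extensions
  set g₁ : ℝ → ℝ := IccExtend hL₁.le ((Icc (0:ℝ) L₁).restrict f₁) with hg₁def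
  set g₂ : ℝ → ℝ := IccExtend hL₂.le ((Icc (0:ℝ) L₂).restrict f₂) with hg₂def
  set g₃ : ℝ → ℝ := IccExtend hL₃.le ((Icc (0:ℝ) L₃).restrict f₃) with hg₃def
  have hg₁ : Continuous g₁ := hf₁.restrict.Icc_extend'
  have hg₂ : Continuous g₂ := hf₂.restrict.Icc_extend'
  have hg₃ : Continuous g₃ := hf₃.restrict.Icc_extend'
  have hgf₁ : ∀ x ∈ Icc (0:ℝ) L₁, g₁ x = f₁ x := fun x hx => by
    rw [hg₁def, IccExtend_of_mem hL₁.le _ hx]; rfl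
  have hgf₂ : ∀ x ∈ Icc (0:ℝ) L₂, g₂ x = f₂ x := fun x hx => by
    rw [hg₂def, IccExtend_of_mem hL₂.le _ hx]; rfl
  have hgf₃ : ∀ x ∈ Icc (0:ℝ) L₃, g₃ x = f₃ x := fun x hx => by
    rw [hg₃def, IccExtend_of_mem hL₃.le _ hx]; rfl
  have hm0₁ : (0:ℝ) ∈ Icc (0:ℝ) L₁ := left_mem_Icc.2 hL₁.le
  have hm0₂ : (0:ℝ) ∈ Icc (0:ℝ) L₂ := left_mem_Icc.2 hL₂.le
  have hm0₃ : (0:ℝ) ∈ Icc (0:ℝ) L₃ := left_mem_Icc.2 hL₃.le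
  have hmL₁ : L₁ ∈ Icc (0:ℝ) L₁ := right_mem_Icc.2 hL₁.le
  have hmL₂ : L₂ ∈ Icc (0:ℝ) L₂ := right_mem_Icc.2 hL₂.le
  have hmL₃ : L₃ ∈ Icc (0:ℝ) L₃ := right_mem_Icc.2 hL₃.le
  -- resolvent condition
  have hΔ : k₂ * L₁ + k₁ * L₂ ≠ 0 := by
    intro h
    apply hres
    field_simp
    linarith [h]
  -- constants
  set C₁ : ℝ := PI (PI g₁) L₁ / k₁ with hC₁
  set C₂ : ℝ := PI (PI g₂) L₂ / k₂ with hC₂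
  set C₃ : ℝ := PI (PI g₃) L₃ / k₃ with hC₃
  set D₁ : ℝ := PI g₁ L₁ / k₁ with hD₁
  set D₂ : ℝ := PI g₂ L₂ / k₂ with hD₂
  set D₃ : ℝ := PI g₃ L₃ / k₃ with hD₃
  set b₁ : ℝ := k₂ * (C₁ - C₂) / (k₂ * L₁ + k₁ * L₂) with hb₁
  set b₂ : ℝ := -(k₁ * b₁) / k₂ with hb₂
  set b₃ : ℝ := (k₁ * D₁ + k₂ * D₂ + k₃ * D₃) / k₃ with hb₃
  set a : ℝ := b₃ * L₃ - C₃ - b₂ * L₂ + C₂ with ha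
  refine ⟨sol g₁ k₁ a b₁, sol g₂ k₂ a b₂, sol g₃ k₃ 0 b₃, ?_, ?_⟩
  · refine ⟨(sol_contDiff hg₁ k₁ a b₁).contDiffOn, (sol_contDiff hg₂ k₂ a b₂).contDiffOn,
      (sol_contDiff hg₃ k₃ 0 b₃).contDiffOn, ?_, ?_, ?_, ?_, ?_, ?_, ?_, ?_, ?_⟩
    · intro x hx
      rw [sol_iter2 hL₁ hg₁ k₁ a b₁ hx, ← hgf₁ x hx]; field_simp
    · intro x hx
      rw [sol_iter2 hL₂ hg₂ k₂ a b₂ hx, ← hgf₂ x hx]; field_simp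
    · intro x hx
      rw [sol_iter2 hL₃ hg₃ k₃ 0 b₃ hx, ← hgf₃ x hx]; field_simp
    · show (0:ℝ) + b₃ * 0 - PI (PI g₃) 0 / k₃ = 0
      simp [PI_zero]
    · show a + b₁ * 0 - PI (PI g₁) 0 / k₁ = a + b₂ * 0 - PI (PI g₂) 0 / k₂
      simp [PI_zero]
    · rw [sol_derivWithin hL₁ hg₁ k₁ a b₁ hm0₁, sol_derivWithin hL₂ hg₂ k₂ a b₂ hm0₂]
      simp only [PI_zero]
      rw [hb₂]; field_simp; ring
    · show a + b₁ * L₁ - PI (PI g₁) L₁ / k₁ = a + b₂ * L₂ - PI (PI g₂) L₂ / k₂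
      rw [show PI (PI g₁) L₁ / k₁ = C₁ from rfl, show PI (PI g₂) L₂ / k₂ = C₂ from rfl,
        hb₂, hb₁]
      field_simp
      ring
    · show a + b₂ * L₂ - PI (PI g₂) L₂ / k₂ = 0 + b₃ * L₃ - PI (PI g₃) L₃ / k₃
      rw [show PI (PI g₂) L₂ / k₂ = C₂ from rfl, show PI (PI g₃) L₃ / k₃ = C₃ from rfl, ha]
      ring
    · rw [sol_derivWithin hL₁ hg₁ k₁ a b₁ hmL₁, sol_derivWithin hL₂ hg₂ k₂ a b₂ hmL₂,
        sol_derivWithin hL₃ hg₃ k₃ 0 b₃ hmL₃,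
        show PI g₁ L₁ / k₁ = D₁ from rfl, show PI g₂ L₂ / k₂ = D₂ from rfl,
        show PI g₃ L₃ / k₃ = D₃ from rfl, hb₃, hb₂]
      field_simp
      ring
  · rintro φ₁ φ₂ φ₃ ⟨hc₁, hc₂, hc₃, ho₁, ho₂, ho₃, h7, h8, h9, h10, h11, h12⟩
    have hode₁ : ∀ x ∈ Icc (0:ℝ) L₁,
        iteratedDerivWithin 2 φ₁ (Icc 0 L₁) x = -(g₁ x / k₁) := by
      intro x hx
      have h := ho₁ x hx
      rw [← hgf₁ x hx] at h
      field_simp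
      linarith
    have hode₂ : ∀ x ∈ Icc (0:ℝ) L₂,
        iteratedDerivWithin 2 φ₂ (Icc 0 L₂) x = -(g₂ x / k₂) := by
      intro x hx
      have h := ho₂ x hx
      rw [← hgf₂ x hx] at h
      field_simp
      linarith
    have hode₃ : ∀ x ∈ Icc (0:ℝ) L₃,
        iteratedDerivWithin 2 φ₃ (Icc 0 L₃) x = -(g₃ x / k₃) := by
      intro x hx
      have h := ho₃ x hx
      rw [← hgf₃ x hx] at h
      field_simp
      linarith
    obtain ⟨hd₁, hv₁⟩ := core hL₁ hg₁ hc₁ hode₁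
    obtain ⟨hd₂, hv₂⟩ := core hL₂ hg₂ hc₂ hode₂
    obtain ⟨hd₃, hv₃⟩ := core hL₃ hg₃ hc₃ hode₃
    set β₁ := derivWithin φ₁ (Icc 0 L₁) 0 with hβ₁def
    set β₂ := derivWithin φ₂ (Icc 0 L₂) 0 with hβ₂def
    set β₃ := derivWithin φ₃ (Icc 0 L₃) 0 with hβ₃def
    set α := φ₁ 0 with hαdef
    -- equations
    have E4 : α + β₁ * L₁ - C₁ = α + β₂ * L₂ - C₂ := by
      have h1 := hv₁ L₁ hmL₁
      have h2 := hv₂ L₂ hmL₂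
      rw [h1, h2, ← h8] at h10
      rw [hC₁, hC₂]
      linarith [h10]
    have E5 : α + β₂ * L₂ - C₂ = β₃ * L₃ - C₃ := by
      have h2 := hv₂ L₂ hmL₂
      have h3 := hv₃ L₃ hmL₃
      rw [h2, h3, h7, ← h8] at h11
      rw [hC₂, hC₃]
      linarith [h11]
    have E6 : k₁ * (β₁ - D₁) + k₂ * (β₂ - D₂) + k₃ * (β₃ - D₃) = 0 := by
      have h1 := hd₁ L₁ hmL₁
      have h2 := hd₂ L₂ hmL₂
      have h3 := hd₃ L₃ hmL₃
      rw [h1, h2, h3] at h12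
      rw [hD₁, hD₂, hD₃]
      linarith [h12]
    -- solve
    have hβ₁ : β₁ = b₁ := by
      have h1 : β₁ * (k₂ * L₁ + k₁ * L₂) = k₂ * (C₁ - C₂) := by
        linear_combination k₂ * E4 + L₂ * h9
      rw [hb₁, eq_div_iff hΔ]
      linarith [h1]
    have hβ₂ : β₂ = b₂ := by
      have h1 : k₂ * β₂ = k₂ * b₂ := by
        have h2 : k₂ * b₂ = -(k₁ * b₁) := by rw [hb₂]; field_simp
        rw [h2, ← hβ₁]
        linarith [h9]
      exact mul_left_cancel₀ hk₂ h1
    have hβ₃ : β₃ = b₃ := by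
      have h1 : k₃ * β₃ = k₃ * b₃ := by
        have h2 : k₃ * b₃ = k₁ * D₁ + k₂ * D₂ + k₃ * D₃ := by rw [hb₃]; field_simp
        have h3 : k₁ * β₁ + k₂ * β₂ = 0 := h9
        rw [h2]
        linarith [E6]
      exact mul_left_cancel₀ hk₃ h1
    have hα : α = a := by
      rw [ha, ← hβ₂, ← hβ₃]
      linarith [E5]
    refine ⟨?_, ?_, ?_⟩
    · intro x hx
      rw [hv₁ x hx, hα, hβ₁]; rfl
    · intro x hx
      rw [hv₂ x hx, ← h8, hα, hβ₂]; rfl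
    · intro x hx
      rw [hv₃ x hx, h7, hβ₃]; rfl
end

section
/- Let $c > 0$ and $t > 0$ be real numbers. Then for every integer $n \ge 1$ there exists exactly one real number $x \in (n\pi, (n+1)\pi)$ such that $\tan(x) = c \tanh(t x)$. -/
open Real Set

/-- Derivative of `x ↦ tanh (t x)`. -/
lemma hasDerivAt_tanh_mul (t x : ℝ) :
    HasDerivAt (fun y => Real.tanh (t * y)) (t / Real.cosh (t * x) ^ 2) x := by
  have h1 : HasDerivAt (fun y : ℝ => t * y) t x := by
    simpa using (hasDerivAt_id x).const_mul t
  have hs : HasDerivAt (fun y => Real.sinh (t * y)) (Real.cosh (t * x) * t) x :=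
    (Real.hasDerivAt_sinh (t * x)).comp x h1
  have hc : HasDerivAt (fun y => Real.cosh (t * y)) (Real.sinh (t * x) * t) x :=
    (Real.hasDerivAt_cosh (t * x)).comp x h1
  have hne : Real.cosh (t * x) ≠ 0 := (Real.cosh_pos _).ne'
  have hdiv : HasDerivAt (fun y => Real.sinh (t * y) / Real.cosh (t * y)) _ x := hs.div hc hne
  have key := Real.cosh_sq_sub_sinh_sq (t * x)
  convert hdiv using 1
  · funext y; rw [Real.tanh_eq_sinh_div_cosh]
  · field_simp
    linear_combination (-t) * key

set_option maxHeartbeats 1000000 in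
/-- Root localization for the dispersion relation (Section 5.1): for positive constants
`c` and `t`, each interval `(nπ, (n+1)π)` with `n ≥ 1` contains exactly one solution of
`tan x = c · tanh (t x)`. -/
theorem stmt_14 (c t : ℝ) (hc : 0 < c) (ht : 0 < t) (n : ℕ) (hn : 1 ≤ n) :
    ∃! x : ℝ, x ∈ Set.Ioo ((n : ℝ) * Real.pi) (((n : ℝ) + 1) * Real.pi) ∧
      Real.tan x = c * Real.tanh (t * x) := by
  have hπ := Real.pi_pos
  have hπ3 := Real.pi_gt_three
  have hn1 : (1 : ℝ) ≤ (n : ℝ) := by exact_mod_cast hn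
  set a : ℝ := (n : ℝ) * Real.pi with ha
  set m : ℝ := a + Real.pi / 2 with hm
  have haπ : Real.pi ≤ a := by nlinarith
  have ha1 : (1 : ℝ) < a := by nlinarith
  -- cos ≠ 0 on [a, m)
  have hcos : ∀ x ∈ Set.Ico a m, Real.cos x ≠ 0 := by
    intro x hx
    rw [Real.cos_ne_zero_iff]
    intro k hk
    rw [hk] at hx
    obtain ⟨h1, h2⟩ := hx
    have hk1 : 2 * (n : ℤ) ≤ 2 * k + 1 := by
      have : 2 * (n : ℝ) ≤ 2 * (k : ℝ) + 1 := by nlinarith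
      exact_mod_cast this
    have hk2 : 2 * (k : ℤ) + 1 < 2 * (n : ℤ) + 1 := by
      have : 2 * (k : ℝ) + 1 < 2 * (n : ℝ) + 1 := by nlinarith
      exact_mod_cast this
    omega
  -- tanh facts
  have hth_pos : ∀ x : ℝ, 0 < x → 0 < Real.tanh (t * x) := by
    intro x hx
    rw [Real.tanh_eq_sinh_div_cosh]
    exact div_pos (Real.sinh_pos_iff.mpr (mul_pos ht hx)) (Real.cosh_pos _)
  have hth_lt : ∀ x : ℝ, Real.tanh (t * x) < 1 := by
    intro x
    rw [Real.tanh_eq_sinh_div_cosh]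
    exact (div_lt_one (Real.cosh_pos _)).mpr (Real.sinh_lt_cosh _)
  set φ : ℝ → ℝ := fun x => Real.tan x / Real.tanh (t * x) with hφ
  -- continuity of φ on Ico a m
  have hth_cont : Continuous fun x : ℝ => Real.tanh (t * x) := by
    have : (fun x : ℝ => Real.tanh (t * x))
        = fun x : ℝ => Real.sinh (t * x) / Real.cosh (t * x) := by
      funext y; rw [Real.tanh_eq_sinh_div_cosh]
    rw [this]
    exact (Real.continuous_sinh.comp (continuous_const.mul continuous_id)).div
      (Real.continuous_cosh.comp (continuous_const.mul continuous_id))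
      fun x => (Real.cosh_pos _).ne'
  have hφcont : ContinuousOn φ (Set.Ico a m) := by
    intro x hx
    have h1 : ContinuousAt φ x := by
      apply ContinuousAt.div
      · exact Real.continuousAt_tan.mpr (hcos x hx)
      · exact hth_cont.continuousAt
      · exact (hth_pos x (by linarith [hx.1])).ne'
    exact h1.continuousWithinAt
  -- strict monotonicity of φ on Ico a m
  have hmono : StrictMonoOn φ (Set.Ico a m) := by
    apply strictMonoOn_of_deriv_pos (convex_Ico a m) hφcont
    rw [interior_Ico]
    intro x hx
    have hx' : x ∈ Set.Ico a m := ⟨hx.1.le, hx.2⟩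
    have hcx := hcos x hx'
    have hx0 : (0 : ℝ) < x := by linarith [hx.1]
    have hxg1 : (1 : ℝ) < x := by linarith [hx.1]
    have htan := Real.hasDerivAt_tan hcx
    have hth := hasDerivAt_tanh_mul t x
    have hthpos := hth_pos x hx0
    have hthne : Real.tanh (t * x) ≠ 0 := hthpos.ne'
    have hdiv : HasDerivAt (fun y => Real.tan y / Real.tanh (t * y)) _ x := htan.div hth hthne
    rw [hdiv.deriv]
    apply div_pos _ (by positivity)
    -- numerator positivity
    have hco2 : (0 : ℝ) < Real.cos x ^ 2 := (sq_nonneg _).lt_of_ne' (pow_ne_zero 2 hcx)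
    have hch : (0 : ℝ) < Real.cosh (t * x) := Real.cosh_pos _
    have hch1 : (1 : ℝ) ≤ Real.cosh (t * x) := Real.one_le_cosh _
    have hsh : t * x < Real.sinh (t * x) := Real.self_lt_sinh_iff.mpr (by positivity)
    have hsc : Real.sin x * Real.cos x ≤ 1 / 2 := by
      nlinarith [Real.sin_sq_add_cos_sq x, sq_nonneg (Real.sin x - Real.cos x)]
    have key : 0 < Real.sinh (t * x) * Real.cosh (t * x)
        - t * (Real.sin x * Real.cos x) := by
      have h1 : t < t * x := by nlinarith
      have h2 : Real.sinh (t * x) ≤ Real.sinh (t * x) * Real.cosh (t * x) := by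
        nlinarith [Real.sinh_pos_iff.mpr (show (0:ℝ) < t * x by positivity)]
      nlinarith
    rw [Real.tan_eq_sin_div_cos, Real.tanh_eq_sinh_div_cosh]
    have heq : 1 / Real.cos x ^ 2 * (Real.sinh (t * x) / Real.cosh (t * x))
        - Real.sin x / Real.cos x * (t / Real.cosh (t * x) ^ 2)
        = (Real.sinh (t * x) * Real.cosh (t * x) - t * (Real.sin x * Real.cos x))
          / (Real.cos x ^ 2 * Real.cosh (t * x) ^ 2) := by
      field_simp
    rw [heq]
    exact div_pos key (by positivity)
  -- φ a = 0
  have hφa : φ a = 0 := by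
    have : Real.tan a = 0 := Real.tan_nat_mul_pi n
    simp [hφ, this]
  -- the point x0 where tan x0 = c + 1
  set u : ℝ := Real.arctan (c + 1) with hu
  have hu0 : 0 < u := by
    rw [hu, ← Real.arctan_zero]
    exact Real.arctan_strictMono (by linarith)
  have hu2 : u < Real.pi / 2 := Real.arctan_lt_pi_div_two _
  set x0 : ℝ := u + a with hx0def
  have hx0m : x0 < m := by rw [hx0def, hm]; linarith
  have hx0a : a < x0 := by rw [hx0def]; linarith
  have htanx0 : Real.tan x0 = c + 1 := by
    rw [hx0def, ha, Real.tan_add_nat_mul_pi, hu, Real.tan_arctan]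
  have hφx0 : c < φ x0 := by
    have h1 := hth_pos x0 (by linarith)
    have h2 := hth_lt x0
    simp only [hφ]
    rw [htanx0, lt_div_iff₀ h1]
    nlinarith
  -- existence via IVT
  have hsub : Set.Icc a x0 ⊆ Set.Ico a m := fun y hy => ⟨hy.1, lt_of_le_of_lt hy.2 hx0m⟩
  have hIVT := intermediate_value_Ioo hx0a.le (hφcont.mono hsub)
  have hcmem : c ∈ Set.Ioo (φ a) (φ x0) := by rw [hφa]; exact ⟨hc, hφx0⟩
  obtain ⟨x, hxmem, hφx⟩ := hIVT hcmem
  have hxm : x ∈ Set.Ico a m := ⟨hxmem.1.le, hxmem.2.trans hx0m⟩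
  have hxthne : Real.tanh (t * x) ≠ 0 := (hth_pos x (by linarith [hxmem.1])).ne'
  have htanx : Real.tan x = c * Real.tanh (t * x) := by
    simp only [hφ] at hφx
    exact (div_eq_iff hxthne).mp hφx
  refine ⟨x, ⟨⟨hxmem.1, ?_⟩, htanx⟩, ?_⟩
  · have hxmlt : x < m := hxmem.2.trans hx0m
    have he : ((n : ℝ) + 1) * Real.pi = a + Real.pi := by rw [ha]; ring
    rw [hm] at hxmlt
    rw [he]
    linarith
  · -- uniqueness
    rintro y ⟨⟨hy1, hy2⟩, hy3⟩
    have hy0 : 0 < y := by linarith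
    have hypos : 0 < c * Real.tanh (t * y) := mul_pos hc (hth_pos y hy0)
    have hym : y < m := by
      by_contra hcon
      push_neg at hcon
      -- y ∈ [m, (n+1)π), show tan y ≤ 0
      have h1 : Real.tan y = Real.tan (y - n * Real.pi) := (Real.tan_sub_nat_mul_pi y n).symm
      have h2 : Real.pi / 2 ≤ y - n * Real.pi := by rw [hm, ha] at hcon; linarith
      have h3 : y - n * Real.pi < Real.pi := by
        have he : ((n : ℝ) + 1) * Real.pi = (n : ℝ) * Real.pi + Real.pi := by ring
        rw [he] at hy2
        linarith
      have h4 : Real.tan (y - n * Real.pi) ≤ 0 := by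
        rw [Real.tan_eq_sin_div_cos]
        apply div_nonpos_of_nonneg_of_nonpos
        · exact Real.sin_nonneg_of_nonneg_of_le_pi (by linarith) h3.le
        · exact Real.cos_nonpos_of_pi_div_two_le_of_le h2 (by linarith)
      rw [← hy3, h1] at hypos
      linarith
    have hymem : y ∈ Set.Ico a m := ⟨hy1.le, hym⟩
    have hyφ : φ y = c := by
      have hne : Real.tanh (t * y) ≠ 0 := (hth_pos y hy0).ne'
      simp only [hφ]
      rw [hy3, mul_div_assoc, div_self hne, mul_one]
    exact hmono.injOn hymem hxm (by rw [hyφ, hφx])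
end

section
/- Let $s > 0$ and $x > 0$ be real numbers, and let $\mu \in \mathbb{C}$ satisfy $\cos(\mu)\sinh(s\mu) - x \sin(\mu)\cosh(s\mu) = 0$ (complex trigonometric and hyperbolic functions). Then $\mu$ is either real or purely imaginary, i.e. $\operatorname{Im}(\mu) = 0$ or $\operatorname{Re}(\mu) = 0$. -/
/-- The complex dispersion relation `cos(μ)sinh(sμ) - x sin(μ)cosh(sμ) = 0` (Section 5.1)
may have solutions only on the real and imaginary axes. -/
theorem stmt_15 (s x : ℝ) (hs : 0 < s) (hx : 0 < x) (μ : ℂ)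
    (h : Complex.cos μ * Complex.sinh ((s : ℂ) * μ)
        - (x : ℂ) * Complex.sin μ * Complex.cosh ((s : ℂ) * μ) = 0) :
    μ.im = 0 ∨ μ.re = 0 := by
  by_contra hcon
  push_neg at hcon
  obtain ⟨hb, ha⟩ := hcon
  set a := μ.re with ha'
  set b := μ.im with hb'
  have hμ : μ = (a : ℂ) + (b : ℂ) * Complex.I := (Complex.re_add_im μ).symm
  have hsμ : (s : ℂ) * μ = ((s*a : ℝ) : ℂ) + ((s*b : ℝ) : ℂ) * Complex.I := by
    rw [hμ]; push_cast; ring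
  have hc : Complex.cos μ
      = ((Real.cos a * Real.cosh b : ℝ) : ℂ) - ((Real.sin a * Real.sinh b : ℝ) : ℂ) * Complex.I := by
    rw [hμ, Complex.cos_add, Complex.cos_mul_I, Complex.sin_mul_I]
    push_cast; ring
  have hsn : Complex.sin μ
      = ((Real.sin a * Real.cosh b : ℝ) : ℂ) + ((Real.cos a * Real.sinh b : ℝ) : ℂ) * Complex.I := by
    rw [hμ, Complex.sin_add, Complex.cos_mul_I, Complex.sin_mul_I]
    push_cast; ring
  have hsh : Complex.sinh ((s : ℂ) * μ)
      = ((Real.sinh (s*a) * Real.cos (s*b) : ℝ) : ℂ)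
        + ((Real.cosh (s*a) * Real.sin (s*b) : ℝ) : ℂ) * Complex.I := by
    rw [hsμ, Complex.sinh_add, Complex.cosh_mul_I, Complex.sinh_mul_I]
    push_cast; ring
  have hch : Complex.cosh ((s : ℂ) * μ)
      = ((Real.cosh (s*a) * Real.cos (s*b) : ℝ) : ℂ)
        + ((Real.sinh (s*a) * Real.sin (s*b) : ℝ) : ℂ) * Complex.I := by
    rw [hsμ, Complex.cosh_add, Complex.cosh_mul_I, Complex.sinh_mul_I]
    push_cast; ring
  rw [hc, hsn, hsh, hch, Complex.ext_iff] at h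
  simp only [Complex.add_re, Complex.add_im, Complex.sub_re, Complex.sub_im, Complex.mul_re,
    Complex.mul_im, Complex.ofReal_re, Complex.ofReal_im, Complex.I_re, Complex.I_im,
    Complex.zero_re, Complex.zero_im] at h
  obtain ⟨h1, h2⟩ := h
  ring_nf at h1 h2
  -- abbreviations
  set sna := Real.sin a
  set csa := Real.cos a
  set shb := Real.sinh b
  set chb := Real.cosh b
  set shp := Real.sinh (s*a)
  set chp := Real.cosh (s*a)
  set snq := Real.sin (s*b)
  set csq := Real.cos (s*b)
  have p1 : sna ^ 2 + csa ^ 2 = 1 := Real.sin_sq_add_cos_sq a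
  have p3 : snq ^ 2 + csq ^ 2 = 1 := Real.sin_sq_add_cos_sq (s*b)
  have p2 : chb ^ 2 - shb ^ 2 = 1 := Real.cosh_sq_sub_sinh_sq b
  have p4 : chp ^ 2 - shp ^ 2 = 1 := Real.cosh_sq_sub_sinh_sq (s*a)
  have key : shp * chp * shb * chb = sna * csa * snq * csq := by
    linear_combination (sna*chb*shp*snq + csa*shb*chp*csq) * h1
      - (sna*chb*chp*csq - csa*shb*shp*snq) * h2
      + (sna*csa*snq*csq*(chp^2-shp^2)) * p2 + (sna*csa*snq*csq) * p4
      - (shb*chb*shp*chp*(snq^2+csq^2)) * p1 - (shb*chb*shp*chp) * p3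
  -- now the inequality
  have key2 : Real.sinh (2*(s*a)) * Real.sinh (2*b) = Real.sin (2*a) * Real.sin (2*(s*b)) := by
    rw [Real.sinh_two_mul, Real.sinh_two_mul, Real.sin_two_mul, Real.sin_two_mul]
    linear_combination 4 * key
  have l1 : |Real.sin (2*a)| ≤ |2*a| := Real.abs_sin_le_abs
  have l2 : |Real.sin (2*(s*b))| ≤ |2*(s*b)| := Real.abs_sin_le_abs
  have l3 : |2*(s*a)| < Real.sinh |2*(s*a)| :=
    Real.self_lt_sinh_iff.2 (abs_pos.2 (mul_ne_zero two_ne_zero (mul_ne_zero hs.ne' ha)))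
  have l4 : |2*b| < Real.sinh |2*b| :=
    Real.self_lt_sinh_iff.2 (abs_pos.2 (mul_ne_zero two_ne_zero hb))
  have e : |2*a| * |2*(s*b)| = |2*(s*a)| * |2*b| := by
    simp only [abs_mul]
    ring
  have lt : |Real.sin (2*a) * Real.sin (2*(s*b))| < |Real.sinh (2*(s*a)) * Real.sinh (2*b)| := by
    calc |Real.sin (2*a) * Real.sin (2*(s*b))| = |Real.sin (2*a)| * |Real.sin (2*(s*b))| :=
          abs_mul _ _
      _ ≤ |2*a| * |2*(s*b)| :=
          mul_le_mul l1 l2 (abs_nonneg _) (abs_nonneg _)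
      _ = |2*(s*a)| * |2*b| := e
      _ < Real.sinh |2*(s*a)| * Real.sinh |2*b| :=
          mul_lt_mul'' l3 l4 (abs_nonneg _) (abs_nonneg _)
      _ = |Real.sinh (2*(s*a))| * |Real.sinh (2*b)| := by
          rw [Real.abs_sinh, Real.abs_sinh]
      _ = |Real.sinh (2*(s*a)) * Real.sinh (2*b)| := (abs_mul _ _).symm
  rw [key2] at lt
  exact absurd rfl lt.ne
end

section
/- Let $N, D$ be natural numbers with $1 \le D < N$, let $k^- < 0$, set $s = \sqrt{-k^-}$, and let $a > 0$ satisfy $D s \cosh(sa)\sin(a) + (N-D) k^- \sinh(sa)\cos(a) = 0$. Define $\psi_j : [0,1] \to \mathbb{R}$ by $\psi_j(x) = \frac{\sin(a)}{\sinh(sa)}\sinh(sax)$ for $1 \le j \le D$ and $\psi_j(x) = \sin(ax)$ for $D+1 \le j \le N$. Then: (i) $\psi_j(0) = 0$ for all $j$; (ii) $\psi_1(1) = \psi_2(1) = \cdots = \psi_N(1)$; (iii) $\sum_{j=1}^{D} \psi_j'(1) + k^- \sum_{j=D+1}^{N} \psi_j'(1) = 0$; (iv) $-\psi_j''(x) =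 k^- a^2 \psi_j(x)$ for all $x$ and all $1 \le j \le D$; and (v) $-k^- \psi_j''(x) = k^- a^2 \psi_j(x)$ for all $x$ and all $D+1 \le j \le N$. -/
open Real

/-- Verification of the first family of two-phase eigenfunctions of Section 5.1: any
`a > 0` solving the dispersion relation
`D s cosh(sa) sin(a) + (N-D) k⁻ sinh(sa) cos(a) = 0` (with `s = √(-k⁻)`) gives rise to
an eigenfunction of the star-network operator with eigenvalue `k⁻ a²`, satisfying the
Dirichlet, continuity and Kirchhoff conditions. -/
theorem stmt_19 (N D : ℕ) (hD : 1 ≤ D) (hDN : D < N)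
    (kneg : ℝ) (hkneg : kneg < 0)
    (s : ℝ) (hs : s = Real.sqrt (-kneg))
    (a : ℝ) (ha : 0 < a)
    (hdisp : (D : ℝ) * s * cosh (s * a) * sin a
        + ((N : ℝ) - (D : ℝ)) * kneg * sinh (s * a) * cos a = 0)
    (ψ : ℕ → ℝ → ℝ)
    (hψ : ψ = fun j x =>
      if j ≤ D then sin a / sinh (s * a) * sinh (s * a * x) else sin (a * x)) :
    (∀ j ∈ Finset.Icc 1 N, ψ j 0 = 0) ∧
    (∀ j ∈ Finset.Icc 1 N, ψ j 1 = ψ 1 1) ∧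
    ((∑ j ∈ Finset.Icc 1 D, deriv (ψ j) 1)
      + kneg * ∑ j ∈ Finset.Icc (D + 1) N, deriv (ψ j) 1 = 0) ∧
    (∀ j ∈ Finset.Icc 1 D, ∀ x : ℝ,
      -(deriv (deriv (ψ j)) x) = kneg * a ^ 2 * ψ j x) ∧
    (∀ j ∈ Finset.Icc (D + 1) N, ∀ x : ℝ,
      -(kneg * deriv (deriv (ψ j)) x) = kneg * a ^ 2 * ψ j x) := by
  have hk' : (0:ℝ) < -kneg := by linarith
  have hs0 : 0 < s := by rw [hs]; exact Real.sqrt_pos.mpr hk'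
  have hs2 : s ^ 2 = -kneg := by rw [hs, sq_sqrt hk'.le]
  have hsa : 0 < s * a := mul_pos hs0 ha
  have hsh : Real.sinh (s * a) ≠ 0 := ne_of_gt (Real.sinh_pos_iff.mpr hsa)
  set c := sin a / Real.sinh (s * a) with hc
  -- branch functions
  have hψ1 : ∀ j, j ≤ D → ψ j = fun x => c * Real.sinh (s * a * x) := by
    intro j hj; funext x; simp [hψ, hj]
  have hψ2 : ∀ j, ¬ j ≤ D → ψ j = fun x => Real.sin (a * x) := by
    intro j hj; funext x; simp [hψ, hj]
  have hlin : ∀ (b x : ℝ), HasDerivAt (fun x : ℝ => b * x) b x := by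
    intro b x; simpa using (hasDerivAt_id x).const_mul b
  have Hd1 : ∀ x, HasDerivAt (fun x => c * Real.sinh (s * a * x))
      (c * (s * a) * Real.cosh (s * a * x)) x := by
    intro x
    have h := ((hlin (s * a) x).sinh).const_mul c
    exact h.congr_deriv (by ring)
  have D1 : deriv (fun x => c * Real.sinh (s * a * x))
      = fun x => c * (s * a) * Real.cosh (s * a * x) := funext fun x => (Hd1 x).deriv
  have Hd2 : ∀ x, HasDerivAt (fun x => c * (s * a) * Real.cosh (s * a * x))
      (c * (s * a) * (s * a) * Real.sinh (s * a * x)) x := by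
    intro x
    have h := ((hlin (s * a) x).cosh).const_mul (c * (s * a))
    exact h.congr_deriv (by ring)
  have Hs1 : ∀ x, HasDerivAt (fun x => Real.sin (a * x)) (a * Real.cos (a * x)) x := by
    intro x
    have h := (hlin a x).sin
    convert h using 1; ring
  have S1 : deriv (fun x => Real.sin (a * x)) = fun x => a * Real.cos (a * x) :=
    funext fun x => (Hs1 x).deriv
  have Hs2 : ∀ x, HasDerivAt (fun x => a * Real.cos (a * x))
      (-(a * a * Real.sin (a * x))) x := by
    intro x
    have h := ((hlin a x).cos).const_mul a
    exact h.congr_deriv (by ring)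
  refine ⟨?_, ?_, ?_, ?_, ?_⟩
  · intro j _
    by_cases hj : j ≤ D
    · simp [hψ1 j hj]
    · simp [hψ2 j hj]
  · intro j _
    have h1 : ψ 1 1 = sin a := by
      rw [hψ1 1 hD]; simp [hc]; field_simp
    by_cases hj : j ≤ D
    · rw [hψ1 j hj, h1]; simp [hc]; field_simp
    · rw [hψ2 j hj, h1]; simp
  · have e1 : ∀ j ∈ Finset.Icc 1 D, deriv (ψ j) 1 = c * (s * a) * Real.cosh (s * a) := by
      intro j hj
      rw [hψ1 j (Finset.mem_Icc.mp hj).2, D1]; simp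
    have e2 : ∀ j ∈ Finset.Icc (D + 1) N, deriv (ψ j) 1 = a * Real.cos a := by
      intro j hj
      have : ¬ j ≤ D := by
        have := (Finset.mem_Icc.mp hj).1; omega
      rw [hψ2 j this, S1]; simp
    rw [Finset.sum_congr rfl e1, Finset.sum_congr rfl e2, Finset.sum_const,
      Finset.sum_const, Nat.card_Icc, Nat.card_Icc, nsmul_eq_mul, nsmul_eq_mul]
    have hcard1 : ((D + 1 - 1 : ℕ) : ℝ) = (D : ℝ) := by norm_num
    have hcard2 : ((N + 1 - (D + 1) : ℕ) : ℝ) = (N : ℝ) - (D : ℝ) := by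
      have : N + 1 - (D + 1) = N - D := by omega
      rw [this, Nat.cast_sub hDN.le]
    rw [hcard1, hcard2, hc]
    field_simp
    linear_combination a * hdisp
  · intro j hj x
    rw [hψ1 j (Finset.mem_Icc.mp hj).2, D1, (Hd2 x).deriv]
    linear_combination (-(c * a ^ 2 * Real.sinh (s * a * x))) * hs2
  · intro j hj x
    have hjD : ¬ j ≤ D := by
      have := (Finset.mem_Icc.mp hj).1; omega
    rw [hψ2 j hjD, S1, (Hs2 x).deriv]
    ring
end
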